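/- The inverse-propensity-weighted estimator L_unbiased = (1/|D|) Σ [ (Y_{u,i}/θ_{u,i})·δ¹_{u,i} + (1 − Y_{u,i}/θ_{u,i})·δ⁰_{u,i} ] is unbiased for the ideal loss: E[L_unbiased] = L_ideal. -/

import Mathlib

open MeasureTheory

/-- The inverse-propensity-weighted estimator is unbiased for the ideal loss. -/
theorem ips_unbiased
    {Ω : Type*} [MeasurableSpace Ω] (μ : Measure Ω) [IsProbabilityMeasure μ]
    {D : Type*} [Fintype D] [Nonempty D]
    (Y : D → Ω → ℝ) (θ γ δ1 δ0 : D → ℝ)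
    (hθ : ∀ d, θ d ∈ Set.Ioc (0 : ℝ) 1) (hγ : ∀ d, γ d ∈ Set.Icc (0 : ℝ) 1)
    (hY01 : ∀ d ω, Y d ω = 0 ∨ Y d ω = 1)
    (hInt : ∀ d, Integrable (Y d) μ)
    (hmean : ∀ d, ∫ ω, Y d ω ∂μ = θ d * γ d) :
    ∫ ω, (1 / (Fintype.card D : ℝ)) *
        ∑ d, ((Y d ω / θ d) * δ1 d + (1 - Y d ω / θ d) * δ0 d) ∂μ
      = (1 / (Fintype.card D : ℝ)) *
        ∑ d, (γ d * δ1 d + (1 - γ d) * δ0 d) := by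
  have key : ∀ d, (fun ω => (Y d ω / θ d) * δ1 d + (1 - Y d ω / θ d) * δ0 d)
      = fun ω => Y d ω * ((δ1 d - δ0 d) / θ d) + δ0 d := by
    intro d; funext ω; field_simp; ring
  have hint : ∀ d, Integrable (fun ω => (Y d ω / θ d) * δ1 d + (1 - Y d ω / θ d) * δ0 d) μ := by
    intro d
    rw [key d]
    exact (((hInt d).mul_const _).add (integrable_const _))
  rw [integral_const_mul, integral_finset_sum _ (fun d _ => hint d)]
  congr 1
  apply Finset.sum_congr rfl
  intro d _
  rw [key d, integral_add ((hInt d).mul_const _) (integrable_const _),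
    integral_mul_const, hmean d, integral_const]
  have hθd := (hθ d).1.ne'
  simp only [measure_univ, probReal_univ, ENNReal.toReal_one, smul_eq_mul, one_mul]
  field_simp
  ring
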